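/- Let $q$ not be a root of unity and let $L_{(a,b)}[\lambda]$ denote the simple $\mathcal{A}_q(2)$-module cyclically generated by an eigenvector of $K = x^a y^b$ with eigenvalue $\lambda \in \mathbb{C}^*$, for coprime positive integers $a, b$. Then $L_{(a,b)}[\lambda] \cong L_{(a',b')}[\lambda']$ if and only if $(a,b) = (a',b')$ and $\lambda' = q^k \lambda$ for some $k \in \mathbb{Z}$. -/

import Mathlib

namespace QPaux

open Module Finset

variable {q lam : ℂ}
variable {M : Type*} [AddCommGroup M] [Module ℂ M]

/-- word action: `true` ↦ X, `false` ↦ Y -/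
def act (X Y : Module.End ℂ M) : List Bool → Module.End ℂ M
  | [] => 1
  | true :: t => X * act X Y t
  | false :: t => Y * act X Y t

def cX (w : List Bool) : ℕ := w.count true
def cY (w : List Bool) : ℕ := w.count false
def wt (a b : ℕ) (w : List Bool) : ℤ := (a : ℤ) * cY w - (b : ℤ) * cX w

def ee : List Bool → ℕ
  | [] => 0
  | true :: t => cY t + ee t
  | false :: t => ee t

def et (a b : ℕ) : ℕ → ℕ
  | 0 => 0
  | t + 1 => et a b t + a * b * (t + 1)

noncomputable def scal (q lam : ℂ) (a b : ℕ) (w : List Bool) : ℂ :=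
  q ^ (ee w) * (q ^ (et a b (cX w / a)))⁻¹ * lam ^ (cX w / a)

@[simp] lemma act_nil (X Y : Module.End ℂ M) : act X Y [] = 1 := rfl
@[simp] lemma act_true (X Y : Module.End ℂ M) (t) : act X Y (true :: t) = X * act X Y t := rfl
@[simp] lemma act_false (X Y : Module.End ℂ M) (t) : act X Y (false :: t) = Y * act X Y t := rfl

lemma act_append (X Y : Module.End ℂ M) (w₁ w₂ : List Bool) :
    act X Y (w₁ ++ w₂) = act X Y w₁ * act X Y w₂ := by
  induction w₁ with
  | nil => simp
  | cons hd tl ih => cases hd <;> simp [ih, mul_assoc]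

@[simp] lemma cX_cons (hd : Bool) (t : List Bool) :
    cX (hd :: t) = cX t + if hd = true then 1 else 0 := by
  cases hd <;> simp [cX, List.count_cons]

@[simp] lemma cY_cons (hd : Bool) (t : List Bool) :
    cY (hd :: t) = cY t + if hd = false then 1 else 0 := by
  cases hd <;> simp [cY, List.count_cons]

lemma cX_append (w₁ w₂ : List Bool) : cX (w₁ ++ w₂) = cX w₁ + cX w₂ := by
  simp [cX, List.count_append]

lemma cY_append (w₁ w₂ : List Bool) : cY (w₁ ++ w₂) = cY w₁ + cY w₂ := by
  simp [cY, List.count_append]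

lemma wt_append (a b : ℕ) (w₁ w₂ : List Bool) :
    wt a b (w₁ ++ w₂) = wt a b w₁ + wt a b w₂ := by
  simp [wt, cX_append, cY_append]; push_cast; ring

section Ops

variable (X Y : Module.End ℂ M) (hrel : X * Y = q • (Y * X))

include hrel

lemma X_pow_Y (n : ℕ) : X * Y ^ n = q ^ n • (Y ^ n * X) := by
  induction n with
  | zero => simp
  | succ n ih =>
    calc X * Y ^ (n + 1) = (X * Y ^ n) * Y := by rw [pow_succ, mul_assoc]
    _ = q ^ n • (Y ^ n * (X * Y)) := by rw [ih]; simp [smul_mul_assoc, mul_assoc]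
    _ = q ^ n • (Y ^ n * (q • (Y * X))) := by rw [hrel]
    _ = q ^ (n + 1) • (Y ^ (n + 1) * X) := by
        rw [mul_smul_comm, smul_smul, pow_succ, pow_succ]
        ring_nf
        rw [mul_assoc]

lemma pow_X_pow_Y (m n : ℕ) : X ^ m * Y ^ n = q ^ (m * n) • (Y ^ n * X ^ m) := by
  induction m with
  | zero => simp
  | succ m ih =>
    calc X ^ (m + 1) * Y ^ n = X * (X ^ m * Y ^ n) := by
          rw [pow_succ', mul_assoc]
    _ = q ^ (m * n) • (X * Y ^ n * X ^ m) := by rw [ih, mul_smul_comm, mul_assoc]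
    _ = q ^ (m * n) • (q ^ n • (Y ^ n * X) * X ^ m) := by rw [X_pow_Y X Y hrel]
    _ = q ^ ((m + 1) * n) • (Y ^ n * X ^ (m + 1)) := by
        rw [smul_mul_assoc, smul_smul, ← pow_add]
        congr 1
        · ring
        · rw [mul_assoc, ← pow_succ']

lemma act_normal (w : List Bool) :
    act X Y w = (q ^ ee w : ℂ) • (Y ^ cY w * X ^ cX w) := by
  induction w with
  | nil => simp [ee, cX, cY]
  | cons hd t ih =>
    cases hd
    · simp only [act_false, ih, ee, cX_cons, cY_cons]
      rw [mul_smul_comm]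
      simp [← mul_assoc, pow_succ']
    · simp only [act_true, ih, ee, cX_cons, cY_cons]
      rw [mul_smul_comm, ← mul_assoc, X_pow_Y X Y hrel, smul_mul_assoc, smul_smul, ← pow_add]
      congr 1
      · ring
      · rw [mul_assoc, ← pow_succ']
        simp

lemma K_pow (a b : ℕ) (t : ℕ) :
    (X ^ a * Y ^ b) ^ t = (q ^ et a b t : ℂ) • (Y ^ (b * t) * X ^ (a * t)) := by
  induction t with
  | zero => simp [et]
  | succ t ih =>
    rw [pow_succ', ih, mul_smul_comm]
    have : X ^ a * Y ^ b * (Y ^ (b * t) * X ^ (a * t))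
        = X ^ a * Y ^ (b + b * t) * X ^ (a * t) := by
      rw [mul_assoc, ← mul_assoc (Y ^ b), ← pow_add, mul_assoc]
    rw [this, pow_X_pow_Y X Y hrel a (b + b * t), smul_mul_assoc, smul_smul, ← pow_add,
      mul_assoc, ← pow_add]
    have h1 : b + b * t = b * (t + 1) := by ring
    have h2 : a + a * t = a * (t + 1) := by ring
    have h3 : et a b t + a * (b * (t + 1)) = et a b (t + 1) := by simp [et]; ring
    rw [h1, h2, h3]

end Ops



lemma zpow_eq_one_iff (hq : q ≠ 0) (hroot : ∀ k : ℕ, q ^ (k + 1) ≠ 1)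
    {d : ℤ} (h : q ^ d = 1) : d = 0 := by
  have key : ∀ d : ℤ, 0 < d → q ^ d ≠ 1 := by
    intro d hd hone
    obtain ⟨n, hn⟩ : ∃ n : ℕ, d = ((n + 1 : ℕ) : ℤ) := ⟨d.toNat - 1, by omega⟩
    exact hroot n (by rw [← zpow_natCast q, ← hn, hone])
  rcases lt_trichotomy d 0 with h1 | h1 | h1
  · exact absurd (by rw [zpow_neg, h, inv_one]) (key (-d) (by omega))
  · exact h1
  · exact absurd h (key d h1)

lemma zpow_inj (hq : q ≠ 0) (hroot : ∀ k : ℕ, q ^ (k + 1) ≠ 1)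
    {k k' : ℤ} (h : q ^ k = q ^ k') : k = k' := by
  have : q ^ (k - k') = 1 := by
    rw [zpow_sub₀ hq, h, div_self (zpow_ne_zero _ hq)]
  have := zpow_eq_one_iff hq hroot this
  omega


lemma indep (X Y : Module.End ℂ M) (hq : q ≠ 0) (hroot : ∀ k : ℕ, q ^ (k + 1) ≠ 1) (hlam : lam ≠ 0)
    (a b : ℕ) (s : Finset ℤ) :
    ∀ y : ℤ → M, (∀ k ∈ s, (X ^ a * Y ^ b) (y k) = (q ^ k * lam) • y k) →
      (∑ k ∈ s, y k) = 0 → ∀ k ∈ s, y k = 0 := by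
  induction s using Finset.induction_on with
  | empty => intro y _ _ k hk; simp at hk
  | @insert k₀ s' hk₀ ih =>
    intro y hy hsum k hk
    have h2 : ∑ j ∈ insert k₀ s', ((q ^ j * lam) • y j) = 0 := by
      rw [← Finset.sum_congr rfl (fun j hj => hy j hj), ← map_sum, hsum, map_zero]
    have h3 : ∑ j ∈ insert k₀ s', ((q ^ j * lam) • y j - (q ^ k₀ * lam) • y j) = 0 := by
      rw [Finset.sum_sub_distrib, h2, ← Finset.smul_sum, hsum, smul_zero, sub_zero]
    rw [Finset.sum_insert hk₀, sub_self, zero_add] at h3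
    set y' : ℤ → M := fun j => ((q ^ j - q ^ k₀) * lam) • y j with hy'
    have h4 : ∑ j ∈ s', y' j = 0 := by
      rw [← h3]
      refine Finset.sum_congr rfl fun j hj => ?_
      simp [hy', sub_mul, sub_smul]
    have h5 : ∀ j ∈ s', (X ^ a * Y ^ b) (y' j) = (q ^ j * lam) • y' j := by
      intro j hj
      simp only [hy', map_smul, hy j (Finset.mem_insert_of_mem hj)]
      rw [smul_comm]
    have h6 : ∀ j ∈ s', y j = 0 := by
      intro j hj
      have := ih y' h5 h4 j hj
      have hne : (q ^ j - q ^ k₀) * lam ≠ 0 := by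
        refine mul_ne_zero (sub_ne_zero.mpr fun hqq => hk₀ ?_) hlam
        rwa [← zpow_inj hq hroot hqq]
      simpa [hy', smul_eq_zero, hne] using this
    rcases Finset.mem_insert.mp hk with rfl | hk'
    · rw [Finset.sum_insert hk₀] at hsum
      rw [Finset.sum_congr rfl h6, Finset.sum_const_zero, add_zero] at hsum
      exact hsum
    · exact h6 k hk'


section Eigen
variable (X Y : Module.End ℂ M)

@[simp] lemma wt_true (a b : ℕ) (t : List Bool) : wt a b (true :: t) = wt a b t - b := by
  simp [wt]; ring

@[simp] lemma wt_false (a b : ℕ) (t : List Bool) : wt a b (false :: t) = wt a b t + a := by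
  simp [wt]; ring

lemma stepX (hrel : X * Y = q • (Y * X)) (hq : q ≠ 0) {a b : ℕ} (ha : 0 < a)
    {v : M} {μ : ℂ} (hμ : μ ≠ 0) (hv0 : v ≠ 0)
    (hv : (X ^ a * Y ^ b) v = μ • v) :
    (X ^ a * Y ^ b) (X v) = ((q ^ b : ℂ)⁻¹ * μ) • X v ∧ X v ≠ 0 := by
  have hop : (X ^ a * Y ^ b) * X = (q ^ b : ℂ)⁻¹ • (X * (X ^ a * Y ^ b)) := by
    have h2 : X * Y ^ b = q ^ b • (Y ^ b * X) := X_pow_Y X Y hrel b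
    have h3 : Y ^ b * X = (q ^ b : ℂ)⁻¹ • (X * Y ^ b) := by
      rw [h2, smul_smul, inv_mul_cancel₀ (pow_ne_zero _ hq), one_smul]
    calc (X ^ a * Y ^ b) * X = X ^ a * (Y ^ b * X) := by rw [mul_assoc]
    _ = (q ^ b : ℂ)⁻¹ • (X ^ a * X * Y ^ b) := by rw [h3, mul_smul_comm, mul_assoc]
    _ = (q ^ b : ℂ)⁻¹ • (X * (X ^ a * Y ^ b)) := by
        rw [← pow_succ, pow_succ', mul_assoc]
  constructor
  · have := congrArg (fun f : Module.End ℂ M => f v) hop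
    simp only [Module.End.mul_apply, LinearMap.smul_apply] at this hv ⊢
    rw [this, hv, map_smul, smul_smul]
  · intro h0
    have hXa : (X ^ a) v = 0 := by
      have : X ^ a = X ^ (a - 1) * X := by
        conv_lhs => rw [show a = (a - 1) + 1 by omega]
        rw [pow_succ]
      rw [this, Module.End.mul_apply, h0, map_zero]
    have := pow_X_pow_Y X Y hrel a b
    have h5 : (X ^ a * Y ^ b) v = (q ^ (a * b) : ℂ) • (Y ^ b) ((X ^ a) v) := by
      rw [this]; simp [Module.End.mul_apply]
    rw [hXa, map_zero, smul_zero, hv] at h5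
    exact hv0 (by simpa [hμ] using h5)

lemma stepY (hrel : X * Y = q • (Y * X)) {a b : ℕ} (hb : 0 < b)
    {v : M} {μ : ℂ} (hμ : μ ≠ 0) (hv0 : v ≠ 0)
    (hv : (X ^ a * Y ^ b) v = μ • v) :
    (X ^ a * Y ^ b) (Y v) = (q ^ a * μ) • Y v ∧ Y v ≠ 0 := by
  have hop : (X ^ a * Y ^ b) * Y = (q ^ a : ℂ) • (Y * (X ^ a * Y ^ b)) := by
    have h2 : X ^ a * Y ^ 1 = q ^ (a * 1) • (Y ^ 1 * X ^ a) := pow_X_pow_Y X Y hrel a 1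
    simp only [pow_one, mul_one] at h2
    calc (X ^ a * Y ^ b) * Y = X ^ a * (Y * Y ^ b) := by
          rw [mul_assoc, ← pow_succ, pow_succ']
    _ = (X ^ a * Y) * Y ^ b := by rw [mul_assoc]
    _ = (q ^ a : ℂ) • (Y * (X ^ a * Y ^ b)) := by
          rw [h2, smul_mul_assoc, mul_assoc]
  constructor
  · have := congrArg (fun f : Module.End ℂ M => f v) hop
    simp only [Module.End.mul_apply, LinearMap.smul_apply] at this hv ⊢
    rw [this, hv, map_smul, smul_smul]
  · intro h0
    have hYb : (Y ^ b) v = 0 := by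
      have : Y ^ b = Y ^ (b - 1) * Y := by
        conv_lhs => rw [show b = (b - 1) + 1 by omega]
        rw [pow_succ]
      rw [this, Module.End.mul_apply, h0, map_zero]
    have h5 : (X ^ a * Y ^ b) v = (X ^ a) ((Y ^ b) v) := rfl
    rw [hYb, map_zero, hv] at h5
    exact hv0 (by simpa [hμ] using h5)

lemma act_eig (hrel : X * Y = q • (Y * X)) (hq : q ≠ 0) {a b : ℕ}
    (ha : 0 < a) (hb : 0 < b) (hlam : lam ≠ 0)
    {v : M} (hv0 : v ≠ 0) {j : ℤ} (hv : (X ^ a * Y ^ b) v = (q ^ j * lam) • v)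
    (w : List Bool) :
    (X ^ a * Y ^ b) (act X Y w v) = (q ^ (j + wt a b w) * lam) • act X Y w v ∧
      act X Y w v ≠ 0 := by
  induction w with
  | nil => simpa [wt, cX, cY] using ⟨hv, hv0⟩
  | cons hd t ih =>
    obtain ⟨ih1, ih2⟩ := ih
    have hμ : q ^ (j + wt a b t) * lam ≠ 0 := mul_ne_zero (zpow_ne_zero _ hq) hlam
    cases hd
    · have := stepY X Y hrel hb hμ ih2 ih1
      refine ⟨?_, by simpa [Module.End.mul_apply] using this.2⟩
      have heq : (q ^ a : ℂ) * (q ^ (j + wt a b t) * lam)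
          = q ^ (j + wt a b (false :: t)) * lam := by
        rw [wt_false, ← zpow_natCast q a, ← mul_assoc, ← zpow_add₀ hq]
        ring_nf
      simpa [Module.End.mul_apply, heq] using this.1
    · have := stepX X Y hrel hq ha hμ ih2 ih1
      refine ⟨?_, by simpa [Module.End.mul_apply] using this.2⟩
      have heq : (q ^ b : ℂ)⁻¹ * (q ^ (j + wt a b t) * lam)
          = q ^ (j + wt a b (true :: t)) * lam := by
        rw [wt_true, ← zpow_natCast q b, ← zpow_neg, ← mul_assoc, ← zpow_add₀ hq]
        ring_nf
      simpa [Module.End.mul_apply, heq] using this.1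

lemma K_pow_apply {a b : ℕ} {v : M} (hv : (X ^ a * Y ^ b) v = lam • v) (t : ℕ) :
    ((X ^ a * Y ^ b) ^ t) v = (lam ^ t) • v := by
  induction t with
  | zero => simp
  | succ t ih =>
    rw [pow_succ', Module.End.mul_apply, ih, map_smul, hv, smul_smul, ← pow_succ]

lemma scal_spec (hrel : X * Y = q • (Y * X)) (hq : q ≠ 0) {a b : ℕ}
    (ha : 0 < a) (hcop : Nat.Coprime a b)
    {v₀ : M} (hv : (X ^ a * Y ^ b) v₀ = lam • v₀)
    {w : List Bool} (hw : wt a b w = 0) :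
    act X Y w v₀ = scal q lam a b w • v₀ := by
  have hnat : a * cY w = b * cX w := by
    have : (a : ℤ) * cY w = (b : ℤ) * cX w := by
      have := hw; simp [wt] at this; linarith
    exact_mod_cast this
  have hdvd : a ∣ cX w := hcop.dvd_of_dvd_mul_left ⟨cY w, by linarith [hnat]⟩
  set t := cX w / a with ht
  have hX : cX w = a * t := (Nat.div_mul_cancel hdvd).symm.trans (by ring)
  have hY : cY w = b * t := by
    have : a * cY w = a * (b * t) := by rw [hnat, hX]; ring
    exact Nat.eq_of_mul_eq_mul_left ha this
  have h1 := act_normal X Y hrel w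
  have h2 := K_pow X Y hrel a b t
  have h3 : (Y ^ (b * t) * X ^ (a * t) : Module.End ℂ M)
      = (q ^ et a b t : ℂ)⁻¹ • (X ^ a * Y ^ b) ^ t := by
    rw [h2, smul_smul, inv_mul_cancel₀ (pow_ne_zero _ hq), one_smul]
  have h4 : act X Y w v₀ = (q ^ ee w : ℂ) • ((q ^ et a b t : ℂ)⁻¹ • ((X ^ a * Y ^ b) ^ t) v₀) := by
    rw [h1, hX, hY, h3]
    simp [LinearMap.smul_apply]
  rw [K_pow_apply X Y hv t] at h4
  rw [h4, scal, ← ht, smul_smul, smul_smul]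

end Eigen

lemma exists_word {a b : ℕ} (ha : 0 < a) (hb : 0 < b) (hcop : Nat.Coprime a b) (k : ℤ) :
    ∃ w : List Bool, wt a b w = k := by
  obtain ⟨u, v, huv⟩ := hcop.isCoprime
  set T : ℤ := ((k * u).natAbs + (k * v).natAbs : ℤ) with hT
  have hT0 : 0 ≤ T := by positivity
  have hbT : T ≤ (b : ℤ) * T := le_mul_of_one_le_left hT0 (by exact_mod_cast hb)
  have haT : T ≤ (a : ℤ) * T := le_mul_of_one_le_left hT0 (by exact_mod_cast ha)
  have h1 : -(((k * u).natAbs : ℤ)) ≤ k * u := by omega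
  have h2 : k * v ≤ ((k * v).natAbs : ℤ) := Int.le_natAbs
  have hn0 : 0 ≤ k * u + b * T := by omega
  have hm0 : 0 ≤ a * T - k * v := by omega
  refine ⟨List.replicate (k * u + b * T).toNat false ++
      List.replicate (a * T - k * v).toNat true, ?_⟩
  have hcX : cX (List.replicate (k * u + b * T).toNat false ++
      List.replicate (a * T - k * v).toNat true) = (a * T - k * v).toNat := by
    simp [cX, List.count_append, List.count_replicate]
  have hcY : cY (List.replicate (k * u + b * T).toNat false ++
      List.replicate (a * T - k * v).toNat true) = (k * u + b * T).toNat := by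
    simp [cY, List.count_append, List.count_replicate]
  rw [wt, hcX, hcY, Int.toNat_of_nonneg hn0, Int.toNat_of_nonneg hm0]
  linear_combination k * huv

noncomputable def pi (X Y : Module.End ℂ M) (v₀ : M) : (List Bool →₀ ℂ) →ₗ[ℂ] M :=
  Finsupp.linearCombination ℂ (fun w => act X Y w v₀)

lemma pi_apply (X Y : Module.End ℂ M) (v₀ : M) (u : List Bool →₀ ℂ) :
    pi X Y v₀ u = ∑ w ∈ u.support, u w • act X Y w v₀ := by
  rw [pi, Finsupp.linearCombination_apply, Finsupp.sum]

lemma pi_single_nil (X Y : Module.End ℂ M) (v₀ : M) :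
    pi X Y v₀ (Finsupp.single [] 1) = v₀ := by
  simp [pi]

lemma pi_cons_true (X Y : Module.End ℂ M) (v₀ : M) (u : List Bool →₀ ℂ) :
    pi X Y v₀ (Finsupp.mapDomain (List.cons true) u) = X (pi X Y v₀ u) := by
  rw [pi, Finsupp.linearCombination_mapDomain]
  exact (LinearMap.map_finsupp_linearCombination X u).symm

lemma pi_cons_false (X Y : Module.End ℂ M) (v₀ : M) (u : List Bool →₀ ℂ) :
    pi X Y v₀ (Finsupp.mapDomain (List.cons false) u) = Y (pi X Y v₀ u) := by
  rw [pi, Finsupp.linearCombination_mapDomain]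
  exact (LinearMap.map_finsupp_linearCombination Y u).symm

lemma pi_surj (X Y : Module.End ℂ M)
    (hsimple : ∀ W : Submodule ℂ M,
      (∀ w ∈ W, X w ∈ W) → (∀ w ∈ W, Y w ∈ W) → W = ⊥ ∨ W = ⊤)
    {v₀ : M} (hv₀ : v₀ ≠ 0) : Function.Surjective (pi X Y v₀) := by
  have hX : ∀ m ∈ LinearMap.range (pi X Y v₀), X m ∈ LinearMap.range (pi X Y v₀) := by
    rintro m ⟨u, rfl⟩
    exact ⟨Finsupp.mapDomain (List.cons true) u, pi_cons_true X Y v₀ u⟩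
  have hY : ∀ m ∈ LinearMap.range (pi X Y v₀), Y m ∈ LinearMap.range (pi X Y v₀) := by
    rintro m ⟨u, rfl⟩
    exact ⟨Finsupp.mapDomain (List.cons false) u, pi_cons_false X Y v₀ u⟩
  rcases hsimple _ hX hY with h | h
  · exfalso
    have : v₀ ∈ LinearMap.range (pi X Y v₀) := ⟨Finsupp.single [] 1, pi_single_nil X Y v₀⟩
    rw [h] at this
    exact hv₀ (by simpa using this)
  · exact LinearMap.range_eq_top.mp h

lemma ker_iff (X Y : Module.End ℂ M) (hrel : X * Y = q • (Y * X)) (hq : q ≠ 0)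
    (hroot : ∀ k : ℕ, q ^ (k + 1) ≠ 1) {a b : ℕ}
    (ha : 0 < a) (hb : 0 < b) (hcop : Nat.Coprime a b) (hlam : lam ≠ 0)
    {v₀ : M} (hv₀ : v₀ ≠ 0) (hK : (X ^ a * Y ^ b) v₀ = lam • v₀)
    (ω : ℤ → List Bool) (hω : ∀ k, wt a b (ω k) = -k) (u : List Bool →₀ ℂ) :
    pi X Y v₀ u = 0 ↔ ∀ k ∈ u.support.image (wt a b),
      (∑ w ∈ u.support.filter (fun w => wt a b w = k),
        u w * scal q lam a b (ω k ++ w)) = 0 := by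
  classical
  have hK0 : (X ^ a * Y ^ b) v₀ = (q ^ (0 : ℤ) * lam) • v₀ := by simpa using hK
  set y : ℤ → M := fun k =>
    ∑ w ∈ u.support.filter (fun w => wt a b w = k), u w • act X Y w v₀ with hy
  have hpi : pi X Y v₀ u = ∑ k ∈ u.support.image (wt a b), y k := by
    rw [pi_apply]
    exact (Finset.sum_fiberwise_of_maps_to
      (fun w hw => Finset.mem_image_of_mem _ hw) _).symm
  have heig : ∀ w ∈ u.support,
      (X ^ a * Y ^ b) (act X Y w v₀) = (q ^ (wt a b w) * lam) • act X Y w v₀ ∧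
        act X Y w v₀ ≠ 0 := by
    intro w _
    have := act_eig X Y hrel hq ha hb hlam hv₀ hK0 w
    simpa using this
  have hyk : ∀ k ∈ u.support.image (wt a b),
      (X ^ a * Y ^ b) (y k) = (q ^ k * lam) • y k := by
    intro k _
    rw [hy, map_sum, Finset.smul_sum]
    refine Finset.sum_congr rfl fun w hw => ?_
    rw [Finset.mem_filter] at hw
    rw [map_smul, (heig w hw.1).1, hw.2, smul_comm]
  have hact : ∀ k ∈ u.support.image (wt a b),
      act X Y (ω k) (y k)
        = (∑ w ∈ u.support.filter (fun w => wt a b w = k),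
            u w * scal q lam a b (ω k ++ w)) • v₀ := by
    intro k _
    rw [hy, map_sum, Finset.sum_smul]
    refine Finset.sum_congr rfl fun w hw => ?_
    rw [Finset.mem_filter] at hw
    have hw0 : wt a b (ω k ++ w) = 0 := by rw [wt_append, hω, hw.2]; ring
    have : act X Y (ω k) (act X Y w v₀) = act X Y (ω k ++ w) v₀ := by
      rw [act_append, Module.End.mul_apply]
    rw [map_smul, this, scal_spec X Y hrel hq ha hcop hK hw0, smul_smul, mul_smul]
  constructor
  · intro h0 k hk
    have hall := indep X Y hq hroot hlam a b (u.support.image (wt a b)) y hyk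
      (by rw [← hpi, h0]) k hk
    have := hact k hk
    rw [hall, map_zero] at this
    rcases smul_eq_zero.mp this.symm with h | h
    · exact h
    · exact absurd h hv₀
  · intro hΦ
    rw [hpi]
    refine Finset.sum_eq_zero fun k hk => ?_
    by_contra hzk
    have h1 := hact k hk
    rw [hΦ k hk, zero_smul] at h1
    have h2 := act_eig X Y hrel hq ha hb hlam hzk (hyk k hk) (ω k)
    exact h2.2 h1

lemma build_iso {M' : Type*} [AddCommGroup M'] [Module ℂ M']
    (X Y : Module.End ℂ M) (X' Y' : Module.End ℂ M')
    (hrel : X * Y = q • (Y * X)) (hrel' : X' * Y' = q • (Y' * X'))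
    (hq : q ≠ 0) (hroot : ∀ k : ℕ, q ^ (k + 1) ≠ 1) {a b : ℕ}
    (ha : 0 < a) (hb : 0 < b) (hcop : Nat.Coprime a b) (hlam : lam ≠ 0)
    (hsimple : ∀ W : Submodule ℂ M,
      (∀ w ∈ W, X w ∈ W) → (∀ w ∈ W, Y w ∈ W) → W = ⊥ ∨ W = ⊤)
    (hsimple' : ∀ W : Submodule ℂ M',
      (∀ w ∈ W, X' w ∈ W) → (∀ w ∈ W, Y' w ∈ W) → W = ⊥ ∨ W = ⊤)
    {v₀ : M} (hv₀ : v₀ ≠ 0) (hK : (X ^ a * Y ^ b) v₀ = lam • v₀)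
    {w₀ : M'} (hw₀ : w₀ ≠ 0) (hK' : (X' ^ a * Y' ^ b) w₀ = lam • w₀) :
    ∃ e : M ≃ₗ[ℂ] M', (∀ m, e (X m) = X' (e m)) ∧ (∀ m, e (Y m) = Y' (e m)) := by
  classical
  choose ω hω using fun k : ℤ => exists_word ha hb hcop (-k)
  have hker : LinearMap.ker (pi X Y v₀) = LinearMap.ker (pi X' Y' w₀) := by
    ext u
    simp only [LinearMap.mem_ker]
    rw [ker_iff X Y hrel hq hroot ha hb hcop hlam hv₀ hK ω hω u,
        ker_iff X' Y' hrel' hq hroot ha hb hcop hlam hw₀ hK' ω hω u]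
  have hs : Function.Surjective (pi X Y v₀) := pi_surj X Y hsimple hv₀
  have hs' : Function.Surjective (pi X' Y' w₀) := pi_surj X' Y' hsimple' hw₀
  set e1 := LinearMap.quotKerEquivOfSurjective _ hs with he1
  set e2 := Submodule.quotEquivOfEq _ _ hker with he2
  set e3 := LinearMap.quotKerEquivOfSurjective _ hs' with he3
  set e : M ≃ₗ[ℂ] M' := (e1.symm.trans e2).trans e3 with he
  have key : ∀ u : List Bool →₀ ℂ, e (pi X Y v₀ u) = pi X' Y' w₀ u := by
    intro u
    have h1 : e1 (Submodule.Quotient.mk u) = pi X Y v₀ u := by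
      simp [he1, LinearMap.quotKerEquivOfSurjective]
    have h1' : e1.symm (pi X Y v₀ u) = Submodule.Quotient.mk u := by
      rw [LinearEquiv.symm_apply_eq, h1]
    have h3 : e3 (Submodule.Quotient.mk u) = pi X' Y' w₀ u := by
      simp [he3, LinearMap.quotKerEquivOfSurjective]
    simp [he, LinearEquiv.trans_apply, h1', he2, Submodule.quotEquivOfEq_mk, h3]
  refine ⟨e, ?_, ?_⟩
  · intro m
    obtain ⟨u, rfl⟩ := hs m
    rw [← pi_cons_true X Y v₀ u, key, key, pi_cons_true]
  · intro m
    obtain ⟨u, rfl⟩ := hs m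
    rw [← pi_cons_false X Y v₀ u, key, key, pi_cons_false]

lemma act_replicate_true (X Y : Module.End ℂ M) (n : ℕ) :
    act X Y (List.replicate n true) = X ^ n := by
  induction n with
  | zero => simp
  | succ n ih => rw [List.replicate_succ, act_true, ih, ← pow_succ']

lemma act_replicate_false (X Y : Module.End ℂ M) (n : ℕ) :
    act X Y (List.replicate n false) = Y ^ n := by
  induction n with
  | zero => simp
  | succ n ih => rw [List.replicate_succ, act_false, ih, ← pow_succ']

lemma act_Kword (X Y : Module.End ℂ M) (a' b' : ℕ) :
    act X Y (List.replicate a' true ++ List.replicate b' false) = X ^ a' * Y ^ b' := by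
  rw [act_append, act_replicate_true, act_replicate_false]

lemma wt_Kword (a b a' b' : ℕ) :
    wt a b (List.replicate a' true ++ List.replicate b' false)
      = (a : ℤ) * b' - (b : ℤ) * a' := by
  simp [wt, cX, cY, List.count_append, List.count_replicate]

lemma forward (X' Y' : Module.End ℂ M) (hrel' : X' * Y' = q • (Y' * X'))
    (hq : q ≠ 0) (hroot : ∀ k : ℕ, q ^ (k + 1) ≠ 1) {a b a' b' : ℕ}
    (ha : 0 < a) (hb : 0 < b) (ha' : 0 < a') (hb' : 0 < b')
    (hcop : Nat.Coprime a b) (hcop' : Nat.Coprime a' b')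
    (hlam : lam ≠ 0) {lam' : ℂ} (hlam' : lam' ≠ 0)
    (hsimple' : ∀ W : Submodule ℂ M,
      (∀ w ∈ W, X' w ∈ W) → (∀ w ∈ W, Y' w ∈ W) → W = ⊥ ∨ W = ⊤)
    {u₀ : M} (hu₀ : u₀ ≠ 0) (hKu : (X' ^ a * Y' ^ b) u₀ = lam • u₀)
    {v₀' : M} (hv₀' : v₀' ≠ 0) (hK' : (X' ^ a' * Y' ^ b') v₀' = lam' • v₀') :
    (a = a' ∧ b = b') ∧ ∃ k : ℤ, lam' = q ^ k * lam := by
  classical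
  obtain ⟨u, hu⟩ := pi_surj X' Y' hsimple' hu₀ v₀'
  have hK0 : (X' ^ a * Y' ^ b) u₀ = (q ^ (0 : ℤ) * lam) • u₀ := by simpa using hKu
  set y : ℤ → M := fun k =>
    ∑ w ∈ u.support.filter (fun w => wt a b w = k), u w • act X' Y' w u₀ with hy
  have hpi : pi X' Y' u₀ u = ∑ k ∈ u.support.image (wt a b), y k := by
    rw [pi_apply]
    exact (Finset.sum_fiberwise_of_maps_to
      (fun w hw => Finset.mem_image_of_mem _ hw) _).symm
  have hyk : ∀ k, (X' ^ a * Y' ^ b) (y k) = (q ^ k * lam) • y k := by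
    intro k
    rw [hy, map_sum, Finset.smul_sum]
    refine Finset.sum_congr rfl fun w hw => ?_
    rw [Finset.mem_filter] at hw
    have := act_eig X' Y' hrel' hq ha hb hlam hu₀ hK0 w
    rw [map_smul, this.1, hw.2, smul_comm]
    norm_num
  set T : Finset ℤ := (u.support.image (wt a b)).filter (fun k => y k ≠ 0) with hTdef
  have hvT : v₀' = ∑ k ∈ T, y k := by
    rw [← hu, hpi, hTdef]
    exact (Finset.sum_filter_ne_zero _).symm
  have hTne : T.Nonempty := by
    rcases Finset.eq_empty_or_nonempty T with h | h
    · exfalso; apply hv₀'; rw [hvT, h, Finset.sum_empty]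
    · exact h
  have hyT : ∀ k ∈ T, y k ≠ 0 := fun k hk => (Finset.mem_filter.mp hk).2
  set w2 : List Bool := List.replicate a' true ++ List.replicate b' false with hw2
  set d : ℤ := (a : ℤ) * b' - (b : ℤ) * a' with hd
  have hwtw2 : wt a b w2 = d := wt_Kword a b a' b'
  have hKyk : ∀ k ∈ T, (X' ^ a * Y' ^ b) ((X' ^ a' * Y' ^ b') (y k))
      = (q ^ (k + d) * lam) • (X' ^ a' * Y' ^ b') (y k)
      ∧ (X' ^ a' * Y' ^ b') (y k) ≠ 0 := by
    intro k hk
    have := act_eig X' Y' hrel' hq ha hb hlam (hyT k hk) (hyk k) w2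
    rwa [act_Kword, hwtw2] at this
  -- the balance equation
  set S : Finset ℤ := T.image (· + d) ∪ T with hS
  set z : ℤ → M := fun j =>
    (if j - d ∈ T then (X' ^ a' * Y' ^ b') (y (j - d)) else 0)
      - (if j ∈ T then lam' • y j else 0) with hz
  have hsum1 : ∑ j ∈ S, (if j - d ∈ T then (X' ^ a' * Y' ^ b') (y (j - d)) else 0)
      = ∑ k ∈ T, (X' ^ a' * Y' ^ b') (y k) := by
    rw [← Finset.sum_subset (Finset.subset_union_left (s₂ := T))]
    · rw [Finset.sum_image (by intro x _ y _ h; exact add_right_cancel h)]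
      refine Finset.sum_congr rfl fun k hk => ?_
      have hkk : k + d - d = k := by ring
      rw [if_pos (by simpa using hk), hkk]
    · intro j hjS hjim
      rw [if_neg]
      intro hmem
      exact hjim (Finset.mem_image.mpr ⟨j - d, hmem, by ring⟩)
  have hsum2 : ∑ j ∈ S, (if j ∈ T then lam' • y j else 0) = ∑ k ∈ T, lam' • y k := by
    rw [← Finset.sum_subset (Finset.subset_union_right (s₁ := T.image (· + d)))]
    · exact Finset.sum_congr rfl fun k hk => if_pos hk
    · intro j _ hj; exact if_neg hj
  have hzsum : ∑ j ∈ S, z j = 0 := by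
    rw [hz, Finset.sum_sub_distrib, hsum1, hsum2, ← Finset.smul_sum, ← map_sum, ← hvT, hK']
    rw [sub_self]
  have hzeig : ∀ j ∈ S, (X' ^ a * Y' ^ b) (z j) = (q ^ j * lam) • z j := by
    intro j _
    rw [hz]
    simp only [map_sub, smul_sub]
    congr 1
    · split_ifs with h
      · have hjd : j - d + d = j := by ring
        rw [(hKyk (j - d) h).1, hjd]
      · simp
    · split_ifs with h
      · rw [map_smul, hyk j, smul_comm]
      · simp
  have hzzero := indep X' Y' hq hroot hlam a b S z hzeig hzsum
  have hd0 : d = 0 := by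
    by_contra hdne
    have hjj : ∃ j, j ∈ S ∧ j - d ∈ T ∧ j ∉ T := by
      rcases lt_or_gt_of_ne hdne with hneg | hpos
      · refine ⟨T.min' hTne + d, ?_, by simpa using T.min'_mem hTne, ?_⟩
        · exact Finset.mem_union_left _ (Finset.mem_image_of_mem _ (T.min'_mem hTne))
        · intro hmem
          have := T.min'_le _ hmem
          omega
      · refine ⟨T.max' hTne + d, ?_, by simpa using T.max'_mem hTne, ?_⟩
        · exact Finset.mem_union_left _ (Finset.mem_image_of_mem _ (T.max'_mem hTne))
        · intro hmem
          have := T.le_max' _ hmem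
          omega
    obtain ⟨j, hjS, hjT, hjnT⟩ := hjj
    have := hzzero j hjS
    rw [hz] at this
    simp only [if_pos hjT, if_neg hjnT, sub_zero] at this
    exact (hKyk (j - d) hjT).2 this
  have hab : a = a' ∧ b = b' := by
    have hdd : (a : ℤ) * b' - (b : ℤ) * a' = 0 := by rw [← hd]; exact hd0
    have hnat : a * b' = b * a' := by
      have : (a : ℤ) * b' = (b : ℤ) * a' := by linarith
      exact_mod_cast this
    have h1 : a ∣ a' := hcop.dvd_of_dvd_mul_left ⟨b', hnat.symm⟩
    have h2 : a' ∣ a := hcop'.dvd_of_dvd_mul_left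
      ⟨b, by rw [Nat.mul_comm b' a, Nat.mul_comm a' b]; exact hnat⟩
    have haa : a = a' := Nat.dvd_antisymm h1 h2
    refine ⟨haa, ?_⟩
    subst haa
    have hfin : a * b' = a * b := by rw [hnat]; ring
    exact (Nat.eq_of_mul_eq_mul_left ha hfin).symm
  refine ⟨hab, ?_⟩
  obtain ⟨k, hk⟩ := hTne
  have hz0 := hzzero k (Finset.mem_union_right _ hk)
  have hkd : k - d ∈ T := by rw [hd0]; simpa using hk
  rw [hz] at hz0
  simp only [if_pos hkd, if_pos hk, sub_eq_zero] at hz0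
  rw [hd0, sub_zero] at hz0
  obtain ⟨rfl, rfl⟩ := hab
  rw [hyk k] at hz0
  have h2 : (q ^ k * lam - lam') • y k = 0 := by rw [sub_smul, hz0, sub_self]
  rcases smul_eq_zero.mp h2 with h | h
  · exact ⟨k, (sub_eq_zero.mp h).symm⟩
  · exact absurd h (hyT k hk)

end QPaux

/-- for `q` not a root of unity, the simple `A_q(2)`-modules
`L_(a,b)[λ]` (cyclically generated by an eigenvector of `K = x^a y^b` with
eigenvalue `λ ≠ 0`, for coprime positive `a, b`) satisfy:
`L_(a,b)[λ] ≅ L_(a',b')[λ']` iff `(a,b) = (a',b')` and `λ' = q^k λ` for some `k ∈ ℤ`. -/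
theorem simple_modules_iso_iff (q : ℂ) (hq : q ≠ 0)
    (hroot : ∀ k : ℕ, q ^ (k + 1) ≠ 1)
    (a b a' b' : ℕ) (ha : 0 < a) (hb : 0 < b) (ha' : 0 < a') (hb' : 0 < b')
    (hcop : Nat.Coprime a b) (hcop' : Nat.Coprime a' b')
    (M : Type*) [AddCommGroup M] [Module ℂ M]
    (X Y : M →ₗ[ℂ] M) (hrel : X ∘ₗ Y = q • (Y ∘ₗ X))
    (hsimple : ∀ W : Submodule ℂ M,
      (∀ w ∈ W, X w ∈ W) → (∀ w ∈ W, Y w ∈ W) → W = ⊥ ∨ W = ⊤)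
    (v₀ : M) (hv₀ : v₀ ≠ 0) (lam : ℂ) (hlam : lam ≠ 0)
    (hK : ((X ^ a) ∘ₗ (Y ^ b)) v₀ = lam • v₀)
    (M' : Type*) [AddCommGroup M'] [Module ℂ M']
    (X' Y' : M' →ₗ[ℂ] M') (hrel' : X' ∘ₗ Y' = q • (Y' ∘ₗ X'))
    (hsimple' : ∀ W : Submodule ℂ M',
      (∀ w ∈ W, X' w ∈ W) → (∀ w ∈ W, Y' w ∈ W) → W = ⊥ ∨ W = ⊤)
    (v₀' : M') (hv₀' : v₀' ≠ 0) (lam' : ℂ) (hlam' : lam' ≠ 0)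
    (hK' : ((X' ^ a') ∘ₗ (Y' ^ b')) v₀' = lam' • v₀') :
    (∃ e : M ≃ₗ[ℂ] M', (∀ m : M, e (X m) = X' (e m)) ∧ (∀ m : M, e (Y m) = Y' (e m)))
      ↔ ((a = a' ∧ b = b') ∧ ∃ k : ℤ, lam' = q ^ k * lam) := by
  rw [← Module.End.mul_eq_comp] at hrel hrel' hK hK'
  constructor
  · rintro ⟨e, heX, heY⟩
    have heXn : ∀ (n : ℕ) (m : M), e ((X ^ n) m) = (X' ^ n) (e m) := by
      intro n
      induction n with
      | zero => intro m; simp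
      | succ n ih =>
        intro m
        have h1 : (X ^ (n + 1)) m = (X ^ n) (X m) := by
          rw [pow_succ, Module.End.mul_apply]
        have h2 : (X' ^ n) (X' (e m)) = (X' ^ (n + 1)) (e m) := by
          rw [pow_succ, Module.End.mul_apply]
        rw [h1, ih, heX, h2]
    have heYn : ∀ (n : ℕ) (m : M), e ((Y ^ n) m) = (Y' ^ n) (e m) := by
      intro n
      induction n with
      | zero => intro m; simp
      | succ n ih =>
        intro m
        have h1 : (Y ^ (n + 1)) m = (Y ^ n) (Y m) := by
          rw [pow_succ, Module.End.mul_apply]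
        have h2 : (Y' ^ n) (Y' (e m)) = (Y' ^ (n + 1)) (e m) := by
          rw [pow_succ, Module.End.mul_apply]
        rw [h1, ih, heY, h2]
    have hKu : (X' ^ a * Y' ^ b) (e v₀) = lam • (e v₀) := by
      have : e ((X ^ a * Y ^ b) v₀) = (X' ^ a * Y' ^ b) (e v₀) := by
        rw [Module.End.mul_apply, Module.End.mul_apply, ← heYn b v₀, ← heXn a _]
      rw [← this, hK, map_smul]
    have hu0 : (e v₀ : M') ≠ 0 := by
      intro h
      exact hv₀ (by simpa using congrArg e.symm h)
    exact QPaux.forward X' Y' hrel' hq hroot ha hb ha' hb' hcop hcop' hlam hlam'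
      hsimple' hu0 hKu hv₀' hK'
  · rintro ⟨⟨rfl, rfl⟩, k, rfl⟩
    obtain ⟨ω, hω⟩ := QPaux.exists_word ha hb hcop (-k)
    have h := QPaux.act_eig X' Y' hrel' hq ha hb hlam hv₀' hK' ω
    rw [hω] at h
    have hw0 : (X' ^ a * Y' ^ b) (QPaux.act X' Y' ω v₀')
        = lam • (QPaux.act X' Y' ω v₀') := by
      have h1 := h.1
      rw [show k + -k = 0 by ring, zpow_zero, one_mul] at h1
      exact h1
    exact QPaux.build_iso X Y X' Y' hrel hrel' hq hroot ha hb hcop hlam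
      hsimple hsimple' hv₀ hK h.2 hw0
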